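/- Let G be a matching covered bipartite graph with bipartition (A, B) and |E(G)| ≥ 2. An edge uv with u ∈ A, v ∈ B is not removable in G if and only if there exist nonempty proper subsets A₁ ⊆ A and B₁ ⊆ B such that the induced subgraph G[A₁ ∪ B₁] is matching covered, u ∈ A₁, v ∈ B \ B₁, and the only edge between A₁ and B \ B₁ is uv. -/

import Mathlib

open SimpleGraph

universe u

/-- A graph has a perfect matching. -/
def HasPM {V : Type u} (G : SimpleGraph V) : Prop :=
  ∃ M : G.Subgraph, M.IsPerfectMatching

/-- A connected graph with at least two vertices in which every edge
lies in a perfect matching. -/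
def MatchingCovered {V : Type u} (G : SimpleGraph V) : Prop :=
  G.Connected ∧ 2 ≤ Nat.card V ∧
    ∀ e ∈ G.edgeSet, ∃ M : G.Subgraph, M.IsPerfectMatching ∧ e ∈ M.edgeSet

/-- Number of odd connected components. -/
noncomputable def oddComps {V : Type u} (G : SimpleGraph V) : ℕ :=
  Nat.card {c : G.ConnectedComponent // Odd (Nat.card c.supp)}

/-- An edge is removable if its deletion leaves a matching covered graph. -/
def Removable {V : Type u} (G : SimpleGraph V) (e : Sym2 V) : Prop :=
  e ∈ G.edgeSet ∧ MatchingCovered (G.deleteEdges {e})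

/-- Removable, with absent edges counted as removable. -/
def RemovableExt {V : Type u} (G : SimpleGraph V) (e : Sym2 V) : Prop :=
  e ∉ G.edgeSet ∨ Removable G e

/-- Degree of a vertex. -/
noncomputable def degN {V : Type u} (G : SimpleGraph V) (v : V) : ℕ :=
  Nat.card (G.neighborSet v)

/-- A graph on at least four vertices is bicritical if deleting any two
distinct vertices leaves a graph with a perfect matching. -/
def Bicritical {V : Type u} (G : SimpleGraph V) : Prop :=
  4 ≤ Nat.card V ∧ ∀ u v : V, u ≠ v → HasPM (G.induce ({u, v}ᶜ : Set V))

/-- A barrier: nonempty set `B` with `o(G - B) = |B|`. -/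
def IsBarrier {V : Type u} (G : SimpleGraph V) (B : Set V) : Prop :=
  B.Nonempty ∧ oddComps (G.induce (Bᶜ : Set V)) = B.ncard

/-- 2-connectedness. -/
def TwoConnected {V : Type u} (G : SimpleGraph V) : Prop :=
  3 ≤ Nat.card V ∧ ∀ s : Set V, s.ncard ≤ 1 → (G.induce (sᶜ : Set V)).Connected

/-- 3-connectedness. -/
def ThreeConnected {V : Type u} (G : SimpleGraph V) : Prop :=
  4 ≤ Nat.card V ∧ ∀ s : Set V, s.ncard ≤ 2 → (G.induce (sᶜ : Set V)).Connected

/-- A brick is a 3-connected bicritical graph. -/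
def IsBrick {V : Type u} (G : SimpleGraph V) : Prop :=
  ThreeConnected G ∧ Bicritical G

/-- Map a vertex to the vertex set of the contraction `G/X`. -/
noncomputable def toContract {V : Type u} (X : Set V) (v : V) : ↥(Xᶜ) ⊕ Unit := by
  classical exact if h : v ∈ X then Sum.inr () else Sum.inl ⟨v, h⟩

/-- Contraction `G/X` of the set `X` to a single vertex. -/
noncomputable def contract {V : Type u} (G : SimpleGraph V) (X : Set V) :
    SimpleGraph (↥(Xᶜ) ⊕ Unit) :=
  SimpleGraph.fromRel (fun a b =>
    ∃ x y, G.Adj x y ∧ a = toContract X x ∧ b = toContract X y)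

/-- The edge cut `∂(X)`. -/
def cutEdges {V : Type u} (G : SimpleGraph V) (X : Set V) : Set (Sym2 V) :=
  {e | e ∈ G.edgeSet ∧ ∃ x y, e = s(x, y) ∧ x ∈ X ∧ y ∉ X}

/-- A tight cut: every perfect matching meets it in exactly one edge. -/
def IsTightCut {V : Type u} (G : SimpleGraph V) (X : Set V) : Prop :=
  ∀ M : G.Subgraph, M.IsPerfectMatching → (cutEdges G X ∩ M.edgeSet).ncard = 1

/-- A separating cut: both contractions are matching covered. -/
def IsSeparatingCut {V : Type u} (G : SimpleGraph V) (X : Set V) : Prop :=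
  MatchingCovered (contract G X) ∧ MatchingCovered (contract G Xᶜ)

/-- `(A, B)` is a bipartition of `G`. -/
def IsBipartition {V : Type u} (G : SimpleGraph V) (A B : Set V) : Prop :=
  A ∪ B = Set.univ ∧ A ∩ B = ∅ ∧
    ∀ u v : V, G.Adj u v → (u ∈ A ∧ v ∈ B) ∨ (u ∈ B ∧ v ∈ A)

/-- A P-set of a bipartite matching covered graph with bipartition `(A, B)`. -/
def IsPSet {V : Type u} (G : SimpleGraph V) (A B X : Set V) : Prop :=
  (X ∩ A).ncard = (X ∩ B).ncard ∧
    ((∃! p : V × V, p.1 ∈ X ∩ A ∧ p.2 ∈ B \ X ∧ G.Adj p.1 p.2) ∨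
     (∃! p : V × V, p.1 ∈ A \ X ∧ p.2 ∈ X ∩ B ∧ G.Adj p.1 p.2))


/-- neighbor set of a set -/
def NS {V : Type u} (G : SimpleGraph V) (S : Set V) : Set V := {y | ∃ x ∈ S, G.Adj x y}

noncomputable def pmP {V : Type u} {G : SimpleGraph V} (M : G.Subgraph)
    (hM : M.IsPerfectMatching) (x : V) : V :=
  (hM.1 (hM.2 x)).choose

lemma pmP_adj {V : Type u} {G : SimpleGraph V} (M : G.Subgraph)
    (hM : M.IsPerfectMatching) (x : V) : M.Adj x (pmP M hM x) :=
  (hM.1 (hM.2 x)).choose_spec.1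

lemma pmP_eq {V : Type u} {G : SimpleGraph V} (M : G.Subgraph)
    (hM : M.IsPerfectMatching) {x y : V} (h : M.Adj x y) : y = pmP M hM x :=
  (hM.1 (hM.2 x)).choose_spec.2 y h

lemma pmP_invol {V : Type u} {G : SimpleGraph V} (M : G.Subgraph)
    (hM : M.IsPerfectMatching) (x : V) : pmP M hM (pmP M hM x) = x :=
  (pmP_eq M hM (pmP_adj M hM x).symm).symm

lemma pmP_inj {V : Type u} {G : SimpleGraph V} (M : G.Subgraph)
    (hM : M.IsPerfectMatching) : Function.Injective (pmP M hM) :=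
  Function.LeftInverse.injective (pmP_invol M hM)

lemma pmP_ne {V : Type u} {G : SimpleGraph V} (M : G.Subgraph)
    (hM : M.IsPerfectMatching) (x : V) : pmP M hM x ≠ x :=
  fun h => (M.adj_sub (pmP_adj M hM x)).ne' (by rw [h])

lemma walk_mem {V : Type u} {G : SimpleGraph V} {X : Set V}
    (hX : ∀ ⦃x y⦄, G.Adj x y → x ∈ X → y ∈ X)
    {s t : V} (w : G.Walk s t) : s ∈ X → t ∈ X := by
  induction w with
  | nil => exact id
  | cons h p ih => exact fun hs => ih (hX h hs)

lemma reach_mem {V : Type u} {G : SimpleGraph V} {X : Set V}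
    (hX : ∀ ⦃x y⦄, G.Adj x y → x ∈ X → y ∈ X)
    {s t : V} (h : G.Reachable s t) (hs : s ∈ X) : t ∈ X := by
  obtain ⟨w⟩ := h; exact walk_mem hX w hs

lemma exists_adj_of_ne {W : Type u} (H : SimpleGraph W) (hc : H.Preconnected)
    {x y : W} (hxy : x ≠ y) : ∃ p q, H.Adj p q := by
  obtain ⟨w⟩ := hc x y
  cases w with
  | nil => exact absurd rfl hxy
  | cons h _ => exact ⟨_, _, h⟩

variable {V : Type u}

/-- a set closed under the partner map has even cardinality -/
lemma even_ncard_pmclosed [Finite V] {G : SimpleGraph V} (M : G.Subgraph)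
    (hM : M.IsPerfectMatching) (S : Set V) (hS : ∀ x ∈ S, pmP M hM x ∈ S) :
    Even S.ncard := by
  classical
  have _ : Fintype V := Fintype.ofFinite V
  let M' : G.Subgraph :=
    { verts := S
      Adj := fun x y => M.Adj x y ∧ x ∈ S ∧ y ∈ S
      adj_sub := fun h => M.adj_sub h.1
      edge_vert := fun h => h.2.1
      symm := ⟨fun x y h => ⟨h.1.symm, h.2.2, h.2.1⟩⟩ }
  have hm : M'.IsMatching := by
    intro x hx
    exact ⟨pmP M hM x, ⟨pmP_adj M hM x, hx, hS x hx⟩,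
      fun y hy => pmP_eq M hM hy.1⟩
  have h1 : Even M'.verts.toFinset.card := hm.even_card
  have h2 : S.ncard = M'.verts.toFinset.card := by
    rw [Set.toFinset_card, ← Nat.card_coe_set_eq, Nat.card_eq_fintype_card]
  rwa [h2]

/-- perfect matching + bipartition gives equal part sizes -/
lemma bip_ncard_eq [Finite V] {G : SimpleGraph V} {A B : Set V}
    (hAdj : ∀ x y, G.Adj x y → (x ∈ A ∧ y ∈ B) ∨ (x ∈ B ∧ y ∈ A)) (hd : A ∩ B = ∅)
    (M : G.Subgraph) (hM : M.IsPerfectMatching) : A.ncard = B.ncard := by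
  have hmem : ∀ x, x ∈ A → pmP M hM x ∈ B := by
    intro x hx
    rcases hAdj x _ (M.adj_sub (pmP_adj M hM x)) with h | h
    · exact h.2
    · exact absurd (Set.mem_inter hx h.1) (by simp [hd])
  have hmem' : ∀ x, x ∈ B → pmP M hM x ∈ A := by
    intro x hx
    rcases hAdj x _ (M.adj_sub (pmP_adj M hM x)) with h | h
    · exact absurd (Set.mem_inter h.1 hx) (by simp [hd])
    · exact h.2
  have himg : pmP M hM '' A = B := by
    apply Set.Subset.antisymm
    · rintro y ⟨x, hx, rfl⟩; exact hmem x hx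
    · intro y hy
      exact ⟨pmP M hM y, hmem' y hy, pmP_invol M hM y⟩
  rw [← himg, Set.ncard_image_of_injective _ (pmP_inj M hM)]

/-- Hall lower bound from a perfect matching -/
lemma hall_lower [Finite V] {G : SimpleGraph V} (M : G.Subgraph)
    (hM : M.IsPerfectMatching) (T : Set V) : T.ncard ≤ (NS G T).ncard := by
  have h1 : pmP M hM '' T ⊆ NS G T := by
    rintro y ⟨x, hx, rfl⟩
    exact ⟨x, hx, M.adj_sub (pmP_adj M hM x)⟩
  calc T.ncard = (pmP M hM '' T).ncard :=
        (Set.ncard_image_of_injective _ (pmP_inj M hM)).symm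
    _ ≤ (NS G T).ncard := Set.ncard_le_ncard h1 (Set.toFinite _)

/-- no proper nonempty tight set in a connected graph all of whose edges lie in PMs -/
lemma no_tight [Finite V] {G : SimpleGraph V} {A B S : Set V}
    (hconn : G.Connected)
    (hmc : ∀ e ∈ G.edgeSet, ∃ M : G.Subgraph, M.IsPerfectMatching ∧ e ∈ M.edgeSet)
    (hAdj : ∀ x y, G.Adj x y → (x ∈ A ∧ y ∈ B) ∨ (x ∈ B ∧ y ∈ A)) (hd : A ∩ B = ∅)
    (hSA : S ⊆ A) (hne : S.Nonempty) (hproper : S ≠ A)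
    (hle : (NS G S).ncard ≤ S.ncard) : False := by
  have hdm : ∀ x, x ∈ A → x ∈ B → False := by
    intro x h1 h2; have := Set.mem_inter h1 h2; rw [hd] at this; exact this
  have himg : ∀ (M : G.Subgraph) (hM : M.IsPerfectMatching), pmP M hM '' S = NS G S := by
    intro M hM
    have h1 : pmP M hM '' S ⊆ NS G S := by
      rintro y ⟨x, hx, rfl⟩; exact ⟨x, hx, M.adj_sub (pmP_adj M hM x)⟩
    apply Set.eq_of_subset_of_ncard_le h1
    rw [Set.ncard_image_of_injective _ (pmP_inj M hM)]; exact hle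
  -- S ∪ NS G S is closed under adjacency
  have hclosed : ∀ ⦃x y⦄, G.Adj x y → x ∈ S ∪ NS G S → y ∈ S ∪ NS G S := by
    intro x y hxy hx
    rcases hx with hx | hx
    · exact Or.inr ⟨x, hx, hxy⟩
    · obtain ⟨M, hM, hMe⟩ := hmc s(x, y) hxy
      rw [SimpleGraph.Subgraph.mem_edgeSet] at hMe
      rw [← himg M hM] at hx
      obtain ⟨z, hz, hzx⟩ := hx
      have : y = pmP M hM x := pmP_eq M hM hMe
      rw [this, ← hzx, pmP_invol]
      exact Or.inl hz
  obtain ⟨s₀, hs₀⟩ := hne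
  obtain ⟨z, hzA, hzS⟩ := Set.exists_of_ssubset (hSA.ssubset_of_ne hproper)
  have hz : z ∈ S ∪ NS G S := reach_mem hclosed (hconn.preconnected s₀ z) (Or.inl hs₀)
  rcases hz with hz | hz
  · exact hzS hz
  · obtain ⟨x, hxS, hxz⟩ := hz
    rcases hAdj x z hxz with h | h
    · exact hdm z hzA h.2
    · exact hdm x (hSA hxS) h.1

lemma ncard_preimage_val {X A₁ : Set V} (h : A₁ ⊆ X) :
    ({p : ↥X | ↑p ∈ A₁} : Set ↥X).ncard = A₁.ncard := by
  rw [← Set.ncard_image_of_injective ({p : ↥X | ↑p ∈ A₁} : Set ↥X) Subtype.val_injective]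
  congr 1
  ext y
  constructor
  · rintro ⟨p, hp, rfl⟩; exact hp
  · intro hy; exact ⟨⟨y, h hy⟩, hy, rfl⟩

lemma pm_del_of_pm {G : SimpleGraph V} {e : Sym2 V} (M : G.Subgraph)
    (hM : M.IsPerfectMatching) (he : e ∉ M.edgeSet) :
    ∃ N : (G.deleteEdges {e}).Subgraph, N.IsPerfectMatching ∧ N.edgeSet = M.edgeSet := by
  refine ⟨⟨M.verts, M.Adj, ?_, M.edge_vert, M.symm⟩, ⟨hM.1, hM.2⟩, rfl⟩
  intro x y h
  rw [deleteEdges_adj]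
  exact ⟨M.adj_sub h, fun hm => he ((Set.mem_singleton_iff.1 hm) ▸
    (SimpleGraph.Subgraph.mem_edgeSet.2 h))⟩

lemma pm_of_pm_del {G : SimpleGraph V} {e : Sym2 V} (N : (G.deleteEdges {e}).Subgraph)
    (hN : N.IsPerfectMatching) :
    ∃ M : G.Subgraph, M.IsPerfectMatching ∧ M.edgeSet = N.edgeSet ∧ e ∉ N.edgeSet := by
  refine ⟨⟨N.verts, N.Adj, fun h => (deleteEdges_adj.mp (N.adj_sub h)).1,
    N.edge_vert, N.symm⟩, ⟨hN.1, hN.2⟩, rfl, ?_⟩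
  intro hmem
  obtain ⟨x, y, he, hadj⟩ : ∃ x y, e = s(x, y) ∧ N.Adj x y := by
    induction e using Sym2.ind with
    | _ x y => exact ⟨x, y, rfl, SimpleGraph.Subgraph.mem_edgeSet.1 hmem⟩
  have := deleteEdges_adj.mp (N.adj_sub hadj)
  exact this.2 (by rw [← he]; rfl)

lemma key [Finite V] {G : SimpleGraph V} {A B : Set V} {u v a b : V}
    (hconn : G.Connected)
    (hmc : ∀ e ∈ G.edgeSet, ∃ M : G.Subgraph, M.IsPerfectMatching ∧ e ∈ M.edgeSet)
    (hAdj : ∀ x y, G.Adj x y → (x ∈ A ∧ y ∈ B) ∨ (x ∈ B ∧ y ∈ A))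
    (hU : A ∪ B = Set.univ) (hd : A ∩ B = ∅)
    (hu : u ∈ A) (hv : v ∈ B)
    (M₀ : G.Subgraph) (hM₀ : M₀.IsPerfectMatching) (hM₀uv : s(u,v) ∉ M₀.edgeSet)
    (ha : a ∈ A) (hb : b ∈ B) (hab : G.Adj a b) (hne : s(a,b) ≠ s(u,v))
    (hbad : ∀ M : G.Subgraph, M.IsPerfectMatching → s(a,b) ∈ M.edgeSet → s(u,v) ∈ M.edgeSet) :
    ∃ T : Set V, T ⊆ A ∧ u ∈ T ∧ a ∉ T ∧
      (NS (G.deleteEdges {s(u,v)}) T).ncard = T.ncard := by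
  classical
  have _ : Fintype V := Fintype.ofFinite V
  set G' := G.deleteEdges {s(u,v)} with hG'
  have hdm : ∀ x, x ∈ A → x ∈ B → False := fun x h1 h2 => by
    have := Set.mem_inter h1 h2; rw [hd] at this; exact this
  have hG'adj : ∀ x y : V, G'.Adj x y ↔ (G.Adj x y ∧ s(x,y) ≠ s(u,v)) := by
    intro x y
    rw [hG', deleteEdges_adj, Set.mem_singleton_iff]
  -- a ≠ u and b ≠ v
  obtain ⟨M₂, hM₂, he₂⟩ := hmc s(a,b) (G.mem_edgeSet.2 hab)
  have huv₂ := hbad M₂ hM₂ he₂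
  have hadj₂ : M₂.Adj a b := SimpleGraph.Subgraph.mem_edgeSet.1 he₂
  have huvadj₂ : M₂.Adj u v := SimpleGraph.Subgraph.mem_edgeSet.1 huv₂
  have hau : a ≠ u := by
    rintro rfl
    have h1 := pmP_eq M₂ hM₂ hadj₂
    have h2 := pmP_eq M₂ hM₂ huvadj₂
    exact hne (by rw [h1.trans h2.symm])
  have hbv : b ≠ v := by
    rintro rfl
    have h1 := pmP_eq M₂ hM₂ hadj₂.symm
    have h2 := pmP_eq M₂ hM₂ huvadj₂.symm
    exact hne (by rw [h1.trans h2.symm])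
  set AA : Set V := A \ {a} with hAA
  let t : ↥AA → Finset V := fun x => Finset.univ.filter (fun y => G'.Adj ↑x y ∧ y ≠ b)
  have htmem : ∀ (x : ↥AA) (y : V), y ∈ t x ↔ (G'.Adj ↑x y ∧ y ≠ b) := by
    intro x y; simp [t]
  have hABcard : A.ncard = B.ncard := bip_ncard_eq hAdj hd M₀ hM₀
  by_cases hhall : ∀ s : Finset ↥AA, s.card ≤ (s.biUnion t).card
  · exfalso
    obtain ⟨f, hfinj, hf⟩ := (Finset.all_card_le_biUnion_card_iff_existsInjective' t).1 hhall
    have hfadj : ∀ x : ↥AA, G'.Adj ↑x (f x) := fun x => ((htmem x (f x)).1 (hf x)).1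
    have hfb : ∀ x : ↥AA, f x ≠ b := fun x => ((htmem x (f x)).1 (hf x)).2
    have hfB : ∀ x : ↥AA, f x ∈ B := by
      intro x
      rcases hAdj _ _ ((hG'adj _ _).1 (hfadj x)).1 with h | h
      · exact h.2
      · exact (hdm _ x.2.1 h.1).elim
    have himg : Set.range f = B \ {b} := by
      have hsub : Set.range f ⊆ B \ {b} := by
        rintro y ⟨x, rfl⟩; exact ⟨hfB x, hfb x⟩
      apply Set.eq_of_subset_of_ncard_le hsub
      have h1 : (Set.range f).ncard = AA.ncard := by
        rw [← Set.image_univ, Set.ncard_image_of_injective _ hfinj, Set.ncard_univ,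
          Nat.card_coe_set_eq]
      rw [h1]
      show (B \ {b}).ncard ≤ (A \ {a}).ncard
      rw [Set.ncard_diff_singleton_of_mem ha, Set.ncard_diff_singleton_of_mem hb, hABcard]
    let MR : V → V → Prop := fun x y =>
      (∃ hx : x ∈ AA, f ⟨x, hx⟩ = y) ∨ (∃ hy : y ∈ AA, f ⟨y, hy⟩ = x) ∨
      (x = a ∧ y = b) ∨ (x = b ∧ y = a)
    let M : G.Subgraph :=
      { verts := Set.univ
        Adj := MR
        adj_sub := by
          rintro x y (⟨hx, rfl⟩ | ⟨hy, rfl⟩ | ⟨rfl, rfl⟩ | ⟨rfl, rfl⟩)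
          · exact ((hG'adj _ _).1 (hfadj ⟨x, hx⟩)).1
          · exact ((hG'adj _ _).1 (hfadj ⟨y, hy⟩)).1.symm
          · exact hab
          · exact hab.symm
        edge_vert := fun _ => trivial
        symm := by
          constructor; rintro x y (⟨hx, rfl⟩ | ⟨hy, hfy⟩ | ⟨rfl, rfl⟩ | ⟨rfl, rfl⟩)
          · exact Or.inr (Or.inl ⟨hx, rfl⟩)
          · exact Or.inl ⟨hy, hfy⟩
          · exact Or.inr (Or.inr (Or.inr ⟨rfl, rfl⟩))
          · exact Or.inr (Or.inr (Or.inl ⟨rfl, rfl⟩)) }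
    have hMadj : ∀ x y : V, M.Adj x y ↔ MR x y := fun x y => Iff.rfl
    have hM : M.IsPerfectMatching := by
      constructor
      · intro x _
        have hxAB : x ∈ A ∪ B := by rw [hU]; trivial
        rcases hxAB with hxA | hxB
        · by_cases hxa : x = a
          · subst hxa
            refine ⟨b, Or.inr (Or.inr (Or.inl ⟨rfl, rfl⟩)), ?_⟩
            rintro y (⟨hx', rfl⟩ | ⟨hy', hfy⟩ | ⟨_, rfl⟩ | ⟨h1, _⟩)
            · exact absurd rfl hx'.2
            · exact (hdm _ ha (hfy ▸ hfB ⟨y, hy'⟩)).elim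
            · rfl
            · exact (hdm _ ha (h1 ▸ hb)).elim
          · have hxAA : x ∈ AA := ⟨hxA, hxa⟩
            refine ⟨f ⟨x, hxAA⟩, Or.inl ⟨hxAA, rfl⟩, ?_⟩
            rintro y (⟨hx', rfl⟩ | ⟨hy', hfy⟩ | ⟨h1, _⟩ | ⟨h1, _⟩)
            · rfl
            · exact (hdm _ hxA (hfy ▸ hfB ⟨y, hy'⟩)).elim
            · exact absurd h1 hxa
            · exact (hdm _ hxA (h1 ▸ hb)).elim
        · by_cases hxb : x = b
          · subst hxb
            refine ⟨a, Or.inr (Or.inr (Or.inr ⟨rfl, rfl⟩)), ?_⟩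
            rintro y (⟨hx', rfl⟩ | ⟨hy', hfy⟩ | ⟨h1, _⟩ | ⟨_, rfl⟩)
            · exact (hdm _ hx'.1 hb).elim
            · exact absurd hfy (hfb ⟨y, hy'⟩)
            · exact (hdm _ (h1 ▸ ha) hb).elim
            · rfl
          · have hxBb : x ∈ B \ {b} := ⟨hxB, hxb⟩
            rw [← himg] at hxBb
            obtain ⟨z, hz⟩ := hxBb
            refine ⟨↑z, Or.inr (Or.inl ⟨z.2, hz⟩), ?_⟩
            rintro y (⟨hx', rfl⟩ | ⟨hy', hfy⟩ | ⟨h1, _⟩ | ⟨h1, _⟩)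
            · exact (hdm _ hx'.1 hxB).elim
            · exact congrArg Subtype.val (hfinj (hfy.trans hz.symm))
            · exact (hdm _ (h1 ▸ ha) hxB).elim
            · exact absurd h1 hxb
      · intro x; trivial
    have habM : s(a,b) ∈ M.edgeSet :=
      SimpleGraph.Subgraph.mem_edgeSet.2 (Or.inr (Or.inr (Or.inl ⟨rfl, rfl⟩)))
    have huvM : s(u,v) ∉ M.edgeSet := by
      intro h
      have hMuv : M.Adj u v := SimpleGraph.Subgraph.mem_edgeSet.1 h
      rcases hMuv with ⟨hx, hfu⟩ | ⟨hy, hfy⟩ | ⟨h1, _⟩ | ⟨h1, _⟩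
      · exact ((hG'adj _ _).1 (hfadj ⟨u, hx⟩)).2 (by rw [hfu])
      · exact hdm _ hy.1 hv
      · exact hau h1.symm
      · exact hdm _ hu (h1 ▸ hb)
    exact huvM (hbad M hM habM)
  · push_neg at hhall
    obtain ⟨s, hs⟩ := hhall
    set T : Set V := Subtype.val '' (↑s : Set ↥AA) with hT
    have hTA : T ⊆ A := by rintro x ⟨z, hz, rfl⟩; exact z.2.1
    have haT : a ∉ T := by rintro ⟨z, hz, hza⟩; exact z.2.2 hza
    have hTcard : T.ncard = s.card := by
      rw [hT, Set.ncard_image_of_injective _ Subtype.val_injective, Set.ncard_coe_finset]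
    obtain ⟨N₀, hN₀, hN₀e⟩ := pm_del_of_pm M₀ hM₀ hM₀uv
    have hlow : T.ncard ≤ (NS G' T).ncard := hall_lower N₀ hN₀ T
    have hNsub : NS G' T ⊆ (↑(s.biUnion t) : Set V) ∪ {b} := by
      rintro y ⟨x, ⟨z, hz, rfl⟩, hadj⟩
      by_cases hyb : y = b
      · exact Or.inr (by simp [hyb])
      · exact Or.inl (by
          rw [Finset.mem_coe, Finset.mem_biUnion]
          exact ⟨z, hz, (htmem z y).2 ⟨hadj, hyb⟩⟩)
    have hup : (NS G' T).ncard ≤ (s.biUnion t).card + 1 := by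
      calc (NS G' T).ncard ≤ ((↑(s.biUnion t) : Set V) ∪ {b}).ncard :=
            Set.ncard_le_ncard hNsub (Set.toFinite _)
        _ ≤ (↑(s.biUnion t) : Set V).ncard + ({b} : Set V).ncard := Set.ncard_union_le _ _
        _ = (s.biUnion t).card + 1 := by rw [Set.ncard_coe_finset, Set.ncard_singleton]
    have htight : (NS G' T).ncard = T.ncard := by omega
    have hTne : T.Nonempty := by
      apply Set.nonempty_of_ncard_ne_zero; omega
    have huT : u ∈ T := by
      by_contra huT
      have hNeq : NS G T = NS G' T := by
        ext y; constructor
        · rintro ⟨x, hxT, hadj⟩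
          refine ⟨x, hxT, (hG'adj x y).2 ⟨hadj, ?_⟩⟩
          intro hsy
          rcases Sym2.eq_iff.1 hsy with ⟨rfl, rfl⟩ | ⟨rfl, rfl⟩
          · exact huT hxT
          · exact hdm x (hTA hxT) hv
        · rintro ⟨x, hxT, hadj⟩; exact ⟨x, hxT, ((hG'adj x y).1 hadj).1⟩
      refine no_tight hconn hmc hAdj hd hTA hTne ?_ ?_
      · intro hEq; exact haT (hEq ▸ ha)
      · rw [hNeq, htight]
    exact ⟨T, hTA, huT, haT, htight⟩

lemma del_conn [Finite V] {G : SimpleGraph V} {u v : V}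
    (hconn : G.Connected)
    (hmc : ∀ e ∈ G.edgeSet, ∃ M : G.Subgraph, M.IsPerfectMatching ∧ e ∈ M.edgeSet)
    (hE : 2 ≤ G.edgeSet.ncard) (huv : G.Adj u v) :
    (G.deleteEdges {s(u,v)}).Connected := by
  classical
  by_contra hnc
  set G' := G.deleteEdges {s(u,v)} with hG'
  have hG'adj : ∀ x y : V, G'.Adj x y ↔ (G.Adj x y ∧ s(x,y) ≠ s(u,v)) := by
    intro x y
    rw [hG', deleteEdges_adj, Set.mem_singleton_iff]
  set C : Set V := {x | G'.Reachable u x} with hC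
  have hCclosed : ∀ ⦃x y⦄, G'.Adj x y → x ∈ C → y ∈ C :=
    fun x y h hx => hx.trans h.reachable
  have hCu : u ∈ C := Reachable.refl u
  have hall : ∀ x, G'.Reachable u x ∨ G'.Reachable v x := by
    intro x
    have hXcl : ∀ ⦃p q⦄, G.Adj p q →
        p ∈ {y | G'.Reachable u y ∨ G'.Reachable v y} →
        q ∈ {y | G'.Reachable u y ∨ G'.Reachable v y} := by
      intro p q hpq hp
      by_cases hs : s(p,q) = s(u,v)
      · rcases Sym2.eq_iff.1 hs with ⟨h1, h2⟩ | ⟨h1, h2⟩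
        · exact Or.inr (by subst h2; exact Reachable.refl _)
        · exact Or.inl (by subst h2; exact Reachable.refl _)
      · have hq : G'.Adj p q := (hG'adj p q).2 ⟨hpq, hs⟩
        rcases hp with h | h
        · exact Or.inl (h.trans hq.reachable)
        · exact Or.inr (h.trans hq.reachable)
    exact reach_mem hXcl (hconn.preconnected u x) (Or.inl (Reachable.refl u))
  have hvC : v ∉ C := by
    intro hvC
    apply hnc
    rw [connected_iff]
    refine ⟨?_, ⟨u⟩⟩
    intro x y
    have hx : G'.Reachable u x := by
      rcases hall x with h | h
      · exact h
      · exact hvC.trans h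
    have hy : G'.Reachable u y := by
      rcases hall y with h | h
      · exact h
      · exact hvC.trans h
    exact hx.symm.trans hy
  obtain ⟨M₁, hM₁, hM₁uv⟩ := hmc s(u,v) (G.mem_edgeSet.2 huv)
  have hM₁adj : M₁.Adj u v := SimpleGraph.Subgraph.mem_edgeSet.1 hM₁uv
  have hpuv : pmP M₁ hM₁ u = v := (pmP_eq M₁ hM₁ hM₁adj).symm
  have hpvu : pmP M₁ hM₁ v = u := (pmP_eq M₁ hM₁ hM₁adj.symm).symm
  -- |C \ {u}| even
  have hCmind : ∀ x ∈ C \ {u}, pmP M₁ hM₁ x ∈ C \ {u} := by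
    rintro x ⟨hxC, hxu⟩
    have hxu' : x ≠ u := hxu
    have hxv : x ≠ v := fun h => hvC (h ▸ hxC)
    have hgadj : G.Adj x (pmP M₁ hM₁ x) := M₁.adj_sub (pmP_adj M₁ hM₁ x)
    have hs : s(x, pmP M₁ hM₁ x) ≠ s(u,v) := by
      intro h
      rcases Sym2.eq_iff.1 h with ⟨h1, _⟩ | ⟨h1, _⟩
      · exact hxu' h1
      · exact hxv h1
    refine ⟨hCclosed ((hG'adj _ _).2 ⟨hgadj, hs⟩) hxC, ?_⟩
    intro hpu
    exact hxv (by
      have h2 := congrArg (pmP M₁ hM₁) (show pmP M₁ hM₁ x = u from hpu)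
      rw [pmP_invol, hpuv] at h2
      exact h2)
  have hCm_even : Even ((C \ {u}).ncard) := even_ncard_pmclosed M₁ hM₁ _ hCmind
  have hCodd : ¬ Even (C.ncard) := by
    have h1 : (C \ {u}).ncard = C.ncard - 1 := Set.ncard_diff_singleton_of_mem hCu
    have h2 : 0 < C.ncard := by
      rw [Set.ncard_pos]
      exact ⟨u, hCu⟩
    obtain ⟨k, hk⟩ := hCm_even
    rintro ⟨m, hm⟩
    omega
  have hNu : ∀ w, G.Adj u w → w = v := by
    intro w hw
    by_contra hwv
    obtain ⟨M₂, hM₂, hM₂e⟩ := hmc s(u,w) (G.mem_edgeSet.2 hw)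
    have hM₂adj : M₂.Adj u w := SimpleGraph.Subgraph.mem_edgeSet.1 hM₂e
    have hM₂uv : s(u,v) ∉ M₂.edgeSet := by
      intro h
      have h2 : M₂.Adj u v := SimpleGraph.Subgraph.mem_edgeSet.1 h
      exact hwv ((pmP_eq M₂ hM₂ hM₂adj).trans (pmP_eq M₂ hM₂ h2).symm)
    have hCind : ∀ x ∈ C, pmP M₂ hM₂ x ∈ C := by
      intro x hxC
      have hgadj : G.Adj x (pmP M₂ hM₂ x) := M₂.adj_sub (pmP_adj M₂ hM₂ x)
      have hs : s(x, pmP M₂ hM₂ x) ≠ s(u,v) := by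
        intro h
        apply hM₂uv
        rw [← h]
        exact SimpleGraph.Subgraph.mem_edgeSet.2 (pmP_adj M₂ hM₂ x)
      exact hCclosed ((hG'adj _ _).2 ⟨hgadj, hs⟩) hxC
    exact hCodd (even_ncard_pmclosed M₂ hM₂ C hCind)
  -- symmetric for v
  set D : Set V := {x | G'.Reachable v x} with hD
  have hDclosed : ∀ ⦃x y⦄, G'.Adj x y → x ∈ D → y ∈ D :=
    fun x y h hx => hx.trans h.reachable
  have hDv : v ∈ D := Reachable.refl v
  have huD : u ∉ D := fun h => hvC h.symm
  have hDmind : ∀ x ∈ D \ {v}, pmP M₁ hM₁ x ∈ D \ {v} := by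
    rintro x ⟨hxD, hxv⟩
    have hxv' : x ≠ v := hxv
    have hxu : x ≠ u := fun h => huD (h ▸ hxD)
    have hgadj : G.Adj x (pmP M₁ hM₁ x) := M₁.adj_sub (pmP_adj M₁ hM₁ x)
    have hs : s(x, pmP M₁ hM₁ x) ≠ s(u,v) := by
      intro h
      rcases Sym2.eq_iff.1 h with ⟨h1, _⟩ | ⟨h1, _⟩
      · exact hxu h1
      · exact hxv' h1
    refine ⟨hDclosed ((hG'adj _ _).2 ⟨hgadj, hs⟩) hxD, ?_⟩
    intro hpv
    exact hxu (by
      have h2 := congrArg (pmP M₁ hM₁) (show pmP M₁ hM₁ x = v from hpv)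
      rw [pmP_invol, hpvu] at h2
      exact h2)
  have hDm_even : Even ((D \ {v}).ncard) := even_ncard_pmclosed M₁ hM₁ _ hDmind
  have hDodd : ¬ Even (D.ncard) := by
    have h1 : (D \ {v}).ncard = D.ncard - 1 := Set.ncard_diff_singleton_of_mem hDv
    have h2 : 0 < D.ncard := by
      rw [Set.ncard_pos]
      exact ⟨v, hDv⟩
    obtain ⟨k, hk⟩ := hDm_even
    rintro ⟨m, hm⟩
    omega
  have hNv : ∀ w, G.Adj v w → w = u := by
    intro w hw
    by_contra hwu
    obtain ⟨M₃, hM₃, hM₃e⟩ := hmc s(v,w) (G.mem_edgeSet.2 hw)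
    have hM₃adj : M₃.Adj v w := SimpleGraph.Subgraph.mem_edgeSet.1 hM₃e
    have hM₃uv : s(u,v) ∉ M₃.edgeSet := by
      intro h
      have h2 : M₃.Adj u v := SimpleGraph.Subgraph.mem_edgeSet.1 h
      exact hwu ((pmP_eq M₃ hM₃ hM₃adj).trans (pmP_eq M₃ hM₃ h2.symm).symm)
    have hDind : ∀ x ∈ D, pmP M₃ hM₃ x ∈ D := by
      intro x hxD
      have hgadj : G.Adj x (pmP M₃ hM₃ x) := M₃.adj_sub (pmP_adj M₃ hM₃ x)
      have hs : s(x, pmP M₃ hM₃ x) ≠ s(u,v) := by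
        intro h
        apply hM₃uv
        rw [← h]
        exact SimpleGraph.Subgraph.mem_edgeSet.2 (pmP_adj M₃ hM₃ x)
      exact hDclosed ((hG'adj _ _).2 ⟨hgadj, hs⟩) hxD
    exact hDodd (even_ncard_pmclosed M₃ hM₃ D hDind)
  -- conclude V = {u, v} and at most one edge
  have huvclosed : ∀ ⦃x y⦄, G.Adj x y → x ∈ ({u, v} : Set V) → y ∈ ({u, v} : Set V) := by
    intro x y h hx
    rcases hx with rfl | hx
    · exact Or.inr (hNu y h)
    · rw [Set.mem_singleton_iff] at hx
      subst hx
      exact Or.inl (hNv y h)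
  have hVsub : ∀ x, x ∈ ({u, v} : Set V) := fun x =>
    reach_mem huvclosed (hconn.preconnected u x) (Or.inl rfl)
  have hEsub : G.edgeSet ⊆ {s(u,v)} := by
    intro e he
    induction e using Sym2.ind with
    | _ x y =>
      have hadj : G.Adj x y := (G.mem_edgeSet).1 he
      rcases hVsub x with rfl | hx
      · rw [Set.mem_singleton_iff, Sym2.eq_iff]
        exact Or.inl ⟨rfl, hNu y hadj⟩
      · rw [Set.mem_singleton_iff] at hx
        subst hx
        rw [Set.mem_singleton_iff, Sym2.eq_iff]
        exact Or.inr ⟨rfl, hNv y hadj⟩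
  have : G.edgeSet.ncard ≤ 1 := by
    have := Set.ncard_le_ncard hEsub (Set.toFinite _)
    rwa [Set.ncard_singleton] at this
  omega

theorem stmt10 {V : Type u} [Finite V] (G : SimpleGraph V) (A B : Set V)
    (hG : MatchingCovered G) (hbip : IsBipartition G A B)
    (hE : 2 ≤ G.edgeSet.ncard)
    (u v : V) (hu : u ∈ A) (hv : v ∈ B) (huv : G.Adj u v) :
    ¬ Removable G s(u, v) ↔
      ∃ A₁ B₁ : Set V, A₁.Nonempty ∧ A₁ ⊂ A ∧ B₁.Nonempty ∧ B₁ ⊂ B ∧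
        MatchingCovered (G.induce (A₁ ∪ B₁)) ∧
        u ∈ A₁ ∧ v ∈ B \ B₁ ∧
        (∀ a ∈ A₁, ∀ b ∈ B \ B₁, G.Adj a b → a = u ∧ b = v) := by
  classical
  obtain ⟨hconn, hcard, hmc⟩ := hG
  obtain ⟨hU, hd, hAdj⟩ := hbip
  have hdm : ∀ x, x ∈ A → x ∈ B → False := fun x h1 h2 => by
    have := Set.mem_inter h1 h2; rw [hd] at this; exact this
  set G' := G.deleteEdges {s(u,v)} with hG'def
  have hG'adj : ∀ x y : V, G'.Adj x y ↔ (G.Adj x y ∧ s(x,y) ≠ s(u,v)) := by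
    intro x y; rw [hG'def, deleteEdges_adj, Set.mem_singleton_iff]
  have huvE : s(u,v) ∈ G.edgeSet := G.mem_edgeSet.2 huv
  constructor
  · -- forward direction
    intro hnrem
    have hnMC : ¬ MatchingCovered G' := fun h => hnrem ⟨huvE, h⟩
    have hconn' : G'.Connected := del_conn hconn hmc hE huv
    have hthird : ¬ (∀ e ∈ G'.edgeSet, ∃ N : G'.Subgraph,
        N.IsPerfectMatching ∧ e ∈ N.edgeSet) := by
      intro h; exact hnMC ⟨hconn', hcard, h⟩
    push_neg at hthird
    obtain ⟨e, heE, hbadN⟩ := hthird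
    -- the G'-neighbor w of u
    have hvne : u ≠ v := huv.ne
    obtain ⟨w, hw⟩ : ∃ w, G'.Adj u w := by
      obtain ⟨wk⟩ := hconn'.preconnected u v
      cases wk with
      | nil => exact absurd rfl hvne
      | cons h _ => exact ⟨_, h⟩
    have hwv : w ≠ v := by
      intro h; exact ((hG'adj u w).1 hw).2 (by rw [h])
    obtain ⟨M₀, hM₀, hM₀e⟩ := hmc s(u,w) (G.mem_edgeSet.2 ((hG'adj u w).1 hw).1)
    have hM₀uv : s(u,v) ∉ M₀.edgeSet := by
      intro h
      exact hwv ((pmP_eq M₀ hM₀ (SimpleGraph.Subgraph.mem_edgeSet.1 hM₀e)).trans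
        (pmP_eq M₀ hM₀ (SimpleGraph.Subgraph.mem_edgeSet.1 h)).symm)
    -- translate "no PM of G' through e"
    have hbadM : ∀ (x y : V), s(x,y) = e → ∀ M : G.Subgraph, M.IsPerfectMatching →
        s(x,y) ∈ M.edgeSet → s(u,v) ∈ M.edgeSet := by
      intro x y hxy M hM hmem
      by_contra hnuv
      obtain ⟨N, hN, hNe⟩ := pm_del_of_pm M hM hnuv
      apply hbadN N hN
      rw [← hxy, hNe]
      exact hmem
    obtain ⟨a, b, hab', habe⟩ : ∃ a b, G'.Adj a b ∧ s(a,b) = e := by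
      clear hbadN hbadM
      revert heE
      induction e using Sym2.ind with
      | _ x y => exact fun heE => ⟨x, y, (G'.mem_edgeSet).1 heE, rfl⟩
    have hgab : G.Adj a b := ((hG'adj a b).1 hab').1
    obtain ⟨a', b', ha', hb', hgab', habe'⟩ :
        ∃ a' b', a' ∈ A ∧ b' ∈ B ∧ G.Adj a' b' ∧ s(a',b') = e := by
      rcases hAdj a b hgab with ⟨h1, h2⟩ | ⟨h1, h2⟩
      · exact ⟨a, b, h1, h2, hgab, habe⟩
      · exact ⟨b, a, h2, h1, hgab.symm, (Sym2.eq_swap).trans habe⟩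
    have habne' : s(a',b') ≠ s(u,v) := by
      rw [habe', ← habe]
      exact ((hG'adj a b).1 hab').2
    have hbad' : ∀ M : G.Subgraph, M.IsPerfectMatching → s(a',b') ∈ M.edgeSet →
        s(u,v) ∈ M.edgeSet := hbadM a' b' habe'
    obtain ⟨T₁, hT₁A, huT₁, haT₁, htight₁⟩ :=
      key hconn hmc hAdj hU hd hu hv M₀ hM₀ hM₀uv ha' hb' hgab' habne' hbad'
    -- tight set machinery
    let Tight : Set V → Prop := fun T => T ⊆ A ∧ u ∈ T ∧ (NS G' T).ncard = T.ncard
    have hTight₁ : Tight T₁ := ⟨hT₁A, huT₁, htight₁⟩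
    obtain ⟨N₀, hN₀, hN₀e⟩ := pm_del_of_pm M₀ hM₀ hM₀uv
    have hTinter : ∀ T T', Tight T → Tight T' → Tight (T ∩ T') := by
      intro T T' h h'
      refine ⟨fun x hx => h.1 hx.1, ⟨h.2.1, h'.2.1⟩, ?_⟩
      have hNcup : NS G' (T ∪ T') = NS G' T ∪ NS G' T' := by
        ext y; constructor
        · rintro ⟨x, hx | hx, hadj⟩
          · exact Or.inl ⟨x, hx, hadj⟩
          · exact Or.inr ⟨x, hx, hadj⟩
        · rintro (⟨x, hx, hadj⟩ | ⟨x, hx, hadj⟩)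
          · exact ⟨x, Or.inl hx, hadj⟩
          · exact ⟨x, Or.inr hx, hadj⟩
      have hNcap : NS G' (T ∩ T') ⊆ NS G' T ∩ NS G' T' := by
        rintro y ⟨x, hx, hadj⟩; exact ⟨⟨x, hx.1, hadj⟩, ⟨x, hx.2, hadj⟩⟩
      have e1 : (NS G' T ∪ NS G' T').ncard + (NS G' T ∩ NS G' T').ncard
          = (NS G' T).ncard + (NS G' T').ncard :=
        Set.ncard_union_add_ncard_inter _ _
      have e2 : (T ∪ T').ncard + (T ∩ T').ncard = T.ncard + T'.ncard :=
        Set.ncard_union_add_ncard_inter _ _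
      have l1 : (T ∪ T').ncard ≤ (NS G' (T ∪ T')).ncard := hall_lower N₀ hN₀ _
      have l2 : (T ∩ T').ncard ≤ (NS G' (T ∩ T')).ncard := hall_lower N₀ hN₀ _
      have l3 : (NS G' (T ∩ T')).ncard ≤ (NS G' T ∩ NS G' T').ncard :=
        Set.ncard_le_ncard hNcap (Set.toFinite _)
      have l4 : (NS G' (T ∪ T')).ncard = (NS G' T ∪ NS G' T').ncard := by rw [hNcup]
      have h2 := h.2.2
      have h2' := h'.2.2
      omega
    have hex : {n | ∃ T, Tight T ∧ T.ncard = n}.Nonempty :=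
      ⟨T₁.ncard, T₁, hTight₁, rfl⟩
    obtain ⟨S, hS, hScard⟩ := Nat.sInf_mem hex
    have hmin : ∀ T, Tight T → sInf {n | ∃ T, Tight T ∧ T.ncard = n} ≤ T.ncard :=
      fun T hT => Nat.sInf_le ⟨T, hT, rfl⟩
    have hminsub : ∀ T, Tight T → S ⊆ T := by
      intro T hT
      have h1 := hTinter S T hS hT
      have h2 : S ∩ T = S := by
        apply Set.eq_of_subset_of_ncard_le Set.inter_subset_left
        rw [hScard]
        exact hmin _ h1
      intro x hx
      have : x ∈ S ∩ T := by rw [h2]; exact hx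
      exact this.2
    obtain ⟨hSA, huS, hStight⟩ := hS
    have haS : a' ∉ S := fun h => haT₁ (hminsub T₁ hTight₁ h)
    have hSproper : S ≠ A := fun h => haS (h ▸ ha')
    set B₁ := NS G' S with hB₁def
    have hB₁B : B₁ ⊆ B := by
      rintro y ⟨x, hx, hadj⟩
      rcases hAdj x y ((hG'adj x y).1 hadj).1 with h | h
      · exact h.2
      · exact (hdm x (hSA hx) h.1).elim
    have hSne : S.Nonempty := ⟨u, huS⟩
    have hvB₁ : v ∉ B₁ := by
      intro hvB₁
      apply no_tight hconn hmc hAdj hd hSA hSne hSproper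
      have hNeq : NS G S = B₁ := by
        ext y; constructor
        · rintro ⟨x, hx, hadj⟩
          by_cases hs : s(x,y) = s(u,v)
          · rcases Sym2.eq_iff.1 hs with ⟨h1, h2⟩ | ⟨h1, h2⟩
            · subst h2; exact hvB₁
            · exact (hdm x (hSA hx) (h1 ▸ hv)).elim
          · exact ⟨x, hx, (hG'adj x y).2 ⟨hadj, hs⟩⟩
        · rintro ⟨x, hx, hadj⟩; exact ⟨x, hx, ((hG'adj x y).1 hadj).1⟩
      rw [hNeq]
      exact hStight.le
    have hwB₁ : w ∈ B₁ := ⟨u, huS, hw⟩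
    have hcut : ∀ x ∈ S, ∀ y ∈ B \ B₁, G.Adj x y → x = u ∧ y = v := by
      intro x hx y hy hadj
      by_cases hs : s(x,y) = s(u,v)
      · rcases Sym2.eq_iff.1 hs with ⟨h1, h2⟩ | ⟨h1, h2⟩
        · exact ⟨h1, h2⟩
        · exact (hdm x (hSA hx) (h1 ▸ hv)).elim
      · exact absurd (⟨x, hx, (hG'adj x y).2 ⟨hadj, hs⟩⟩ : y ∈ B₁) hy.2
    have hL6 : ∀ (M : G.Subgraph) (hM : M.IsPerfectMatching), s(u,v) ∉ M.edgeSet →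
        (∀ x ∈ S, pmP M hM x ∈ B₁) ∧ (∀ y ∈ B₁, pmP M hM y ∈ S) := by
      intro M hM hMuv
      have h1 : ∀ x ∈ S, pmP M hM x ∈ B₁ := by
        intro x hx
        have hadj := M.adj_sub (pmP_adj M hM x)
        have hs : s(x, pmP M hM x) ≠ s(u,v) := fun h =>
          hMuv (h ▸ SimpleGraph.Subgraph.mem_edgeSet.2 (pmP_adj M hM x))
        exact ⟨x, hx, (hG'adj _ _).2 ⟨hadj, hs⟩⟩
      refine ⟨h1, ?_⟩
      have himg : pmP M hM '' S = B₁ := by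
        apply Set.eq_of_subset_of_ncard_le
        · rintro y ⟨x, hx, rfl⟩; exact h1 x hx
        · rw [Set.ncard_image_of_injective _ (pmP_inj M hM)]
          exact hStight.le
        · exact Set.toFinite _
      intro y hy
      rw [← himg] at hy
      obtain ⟨x, hx, hxy⟩ := hy
      rw [← hxy, pmP_invol]
      exact hx
    set X := S ∪ B₁ with hXdef
    have huX : u ∈ X := Or.inl huS
    have hXA : ∀ z, z ∈ X → z ∈ A → z ∈ S := by
      rintro z (hz | hz) hzA
      · exact hz
      · exact (hdm z hzA (hB₁B hz)).elim
    have hXB : ∀ z, z ∈ X → z ∈ B → z ∈ B₁ := by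
      rintro z (hz | hz) hzB
      · exact (hdm z (hSA hz) hzB).elim
      · exact hz
    have hedgePM : ∀ x ∈ S, ∀ y ∈ B₁, G.Adj x y →
        ∃ M : G.Subgraph, M.IsPerfectMatching ∧ s(x,y) ∈ M.edgeSet ∧
          s(u,v) ∉ M.edgeSet := by
      intro x hx y hy hadj
      by_contra hno
      have hbad2 : ∀ M : G.Subgraph, M.IsPerfectMatching → s(x,y) ∈ M.edgeSet →
          s(u,v) ∈ M.edgeSet := by
        intro M hM hmem
        by_contra h
        exact hno ⟨M, hM, hmem, h⟩
      have hsne : s(x,y) ≠ s(u,v) := by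
        intro h
        rcases Sym2.eq_iff.1 h with ⟨h1, h2⟩ | ⟨h1, h2⟩
        · exact hvB₁ (h2 ▸ hy)
        · exact hdm x (hSA hx) (h1 ▸ hv)
      obtain ⟨T₂, hT₂A, huT₂, hxT₂, ht₂⟩ :=
        key hconn hmc hAdj hU hd hu hv M₀ hM₀ hM₀uv (hSA hx) (hB₁B hy) hadj hsne hbad2
      exact hxT₂ (hminsub T₂ ⟨hT₂A, huT₂, ht₂⟩ hx)
    -- builder for induced perfect matchings
    have hbuild : ∀ (M : G.Subgraph) (hM : M.IsPerfectMatching), s(u,v) ∉ M.edgeSet →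
        ∃ Mi : (G.induce X).Subgraph, Mi.IsPerfectMatching ∧
          (∀ p q : ↥X, (Mi.Adj p q ↔ M.Adj ↑p ↑q)) := by
      intro M hM hMuv
      obtain ⟨hp1, hp2⟩ := hL6 M hM hMuv
      have hpX : ∀ z ∈ X, pmP M hM z ∈ X := by
        rintro z (hz | hz)
        · exact Or.inr (hp1 z hz)
        · exact Or.inl (hp2 z hz)
      refine ⟨⟨Set.univ, fun p q => M.Adj ↑p ↑q, ?_, fun _ => trivial,
        ⟨fun p q h => h.symm⟩⟩, ⟨?_, fun p => trivial⟩, fun p q => Iff.rfl⟩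
      · intro p q h
        exact M.adj_sub h
      · rintro ⟨x, hx⟩ -
        refine ⟨⟨pmP M hM x, hpX x hx⟩, pmP_adj M hM x, ?_⟩
        rintro ⟨q, hq⟩ hadj
        exact Subtype.ext (pmP_eq M hM hadj)
    -- connectivity of the induced graph
    have hconnX : (G.induce X).Connected := by
      set R : Set V := {x | ∃ hx : x ∈ X, (G.induce X).Reachable ⟨u, huX⟩ ⟨x, hx⟩}
        with hRdef
      have huR : u ∈ R := ⟨huX, Reachable.refl _⟩
      have hstep : ∀ x ∈ R, ∀ y, y ∈ X → G.Adj x y → y ∈ R := by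
        rintro x ⟨hxX, hreach⟩ y hyX hadj
        exact ⟨hyX, hreach.trans
          (SimpleGraph.Adj.reachable (show (G.induce X).Adj ⟨x, hxX⟩ ⟨y, hyX⟩ from hadj))⟩
      have hS'tight : Tight (S ∩ R) := by
        refine ⟨fun z hz => hSA hz.1, ⟨huS, huR⟩, ?_⟩
        have hsub1 : NS G' (S ∩ R) ⊆ B₁ ∩ R := by
          rintro y ⟨x, hx, hadj⟩
          have hyB₁ : y ∈ B₁ := ⟨x, hx.1, hadj⟩
          exact ⟨hyB₁, hstep x hx.2 y (Or.inr hyB₁) ((hG'adj _ _).1 hadj).1⟩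
        have hsub2 : ∀ y ∈ B₁ ∩ R, pmP M₀ hM₀ y ∈ S ∩ R := by
          intro y hy
          have h1 : pmP M₀ hM₀ y ∈ S := (hL6 M₀ hM₀ hM₀uv).2 y hy.1
          exact ⟨h1, hstep y hy.2 _ (Or.inl h1) (M₀.adj_sub (pmP_adj M₀ hM₀ y))⟩
        have c1 : (S ∩ R).ncard ≤ (NS G' (S ∩ R)).ncard := hall_lower N₀ hN₀ _
        have c2 : (NS G' (S ∩ R)).ncard ≤ (B₁ ∩ R).ncard :=
          Set.ncard_le_ncard hsub1 (Set.toFinite _)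
        have c3 : (B₁ ∩ R).ncard ≤ (S ∩ R).ncard := by
          rw [← Set.ncard_image_of_injective (B₁ ∩ R) (pmP_inj M₀ hM₀)]
          apply Set.ncard_le_ncard _ (Set.toFinite _)
          rintro z ⟨y, hy, rfl⟩
          exact hsub2 y hy
        omega
      have hSsub : S ⊆ S ∩ R := hminsub _ hS'tight
      have hSR : ∀ x ∈ S, x ∈ R := fun x hx => (hSsub hx).2
      have hB₁R : ∀ y ∈ B₁, y ∈ R := by
        intro y hy
        have h1 : pmP M₀ hM₀ y ∈ S := (hL6 M₀ hM₀ hM₀uv).2 y hy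
        exact hstep _ (hSR _ h1) y (Or.inr hy)
          (M₀.adj_sub (pmP_adj M₀ hM₀ y).symm)
      have hXR : ∀ x, x ∈ X → x ∈ R := by
        rintro x (hx | hx)
        · exact hSR x hx
        · exact hB₁R x hx
      rw [connected_iff]
      refine ⟨?_, ⟨⟨u, huX⟩⟩⟩
      rintro ⟨x, hx⟩ ⟨y, hy⟩
      obtain ⟨hx', hrx⟩ := hXR x hx
      obtain ⟨hy', hry⟩ := hXR y hy
      exact Reachable.trans (Reachable.symm hrx) hry
    have hcardX : 2 ≤ Nat.card ↥X := by
      have h1 : u ≠ w := (((hG'adj u w).1 hw).1).ne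
      rw [Nat.card_coe_set_eq]
      have : 1 < X.ncard := by
        rw [Set.one_lt_ncard_iff (Set.toFinite _)]
        exact ⟨u, w, huX, Or.inr hwB₁, h1⟩
      omega
    have hmcX : ∀ e ∈ (G.induce X).edgeSet, ∃ Mi : (G.induce X).Subgraph,
        Mi.IsPerfectMatching ∧ e ∈ Mi.edgeSet := by
      intro e he
      revert he
      induction e using Sym2.ind with
      | _ p q =>
        intro he
        have hadj : (G.induce X).Adj p q := ((G.induce X).mem_edgeSet).1 he
        have hg : G.Adj ↑p ↑q := hadj
        rcases hAdj ↑p ↑q hg with ⟨hpA, hqB⟩ | ⟨hpB, hqA⟩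
        · obtain ⟨M, hM, hmem, hMuv⟩ :=
            hedgePM _ (hXA _ p.2 hpA) _ (hXB _ q.2 hqB) hg
          obtain ⟨Mi, hMi, hiff⟩ := hbuild M hM hMuv
          exact ⟨Mi, hMi, SimpleGraph.Subgraph.mem_edgeSet.2
            ((hiff p q).2 (SimpleGraph.Subgraph.mem_edgeSet.1 hmem))⟩
        · obtain ⟨M, hM, hmem, hMuv⟩ :=
            hedgePM _ (hXA _ q.2 hqA) _ (hXB _ p.2 hpB) hg.symm
          obtain ⟨Mi, hMi, hiff⟩ := hbuild M hM hMuv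
          refine ⟨Mi, hMi, SimpleGraph.Subgraph.mem_edgeSet.2 ?_⟩
          exact ((hiff p q).2 (SimpleGraph.Subgraph.mem_edgeSet.1 hmem).symm)
    refine ⟨S, B₁, hSne, hSA.ssubset_of_ne hSproper, ⟨w, hwB₁⟩,
      hB₁B.ssubset_of_ne (fun h => hvB₁ (h.symm ▸ hv)), ⟨hconnX, hcardX, hmcX⟩,
      huS, ⟨hv, hvB₁⟩, hcut⟩
  · -- backward direction
    rintro ⟨A₁, B₁, hA₁ne, hA₁sub, hB₁ne, hB₁sub, hMCind, huA₁, hvB₁, hcut⟩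
    rintro ⟨-, hMC'⟩
    obtain ⟨hconn', hcard', hmc'⟩ := hMC'
    set X := A₁ ∪ B₁ with hXdef
    have hA₁A : A₁ ⊆ A := hA₁sub.1
    have hB₁B : B₁ ⊆ B := hB₁sub.1
    obtain ⟨hconnX, hcardX, hmcX⟩ := hMCind
    -- |A₁| = |B₁|
    have hcard11 : A₁.ncard = B₁.ncard := by
      have hnontriv : Nontrivial ↥X := by
        rw [← Finite.one_lt_card_iff_nontrivial]
        omega
      obtain ⟨x1, x2, hne12⟩ := exists_pair_ne ↥X
      obtain ⟨p, q, hpq⟩ := exists_adj_of_ne _ hconnX.preconnected hne12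
      obtain ⟨Mi, hMi, -⟩ := hmcX s(p,q) (((G.induce X)).mem_edgeSet.2 hpq)
      have hAdj' : ∀ x y : ↥X, (G.induce X).Adj x y →
          (x ∈ {p : ↥X | ↑p ∈ A₁} ∧ y ∈ {p : ↥X | ↑p ∈ B₁}) ∨
          (x ∈ {p : ↥X | ↑p ∈ B₁} ∧ y ∈ {p : ↥X | ↑p ∈ A₁}) := by
        intro x y hxy
        have hg : G.Adj ↑x ↑y := hxy
        rcases hAdj ↑x ↑y hg with ⟨h1, h2⟩ | ⟨h1, h2⟩
        · refine Or.inl ⟨?_, ?_⟩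
          · rcases x.2 with h | h
            · exact h
            · exact (hdm ↑x h1 (hB₁B h)).elim
          · rcases y.2 with h | h
            · exact (hdm ↑y (hA₁A h) h2).elim
            · exact h
        · refine Or.inr ⟨?_, ?_⟩
          · rcases x.2 with h | h
            · exact (hdm ↑x (hA₁A h) h1).elim
            · exact h
          · rcases y.2 with h | h
            · exact h
            · exact (hdm ↑y h2 (hB₁B h)).elim
      have hd' : {p : ↥X | ↑p ∈ A₁} ∩ {p : ↥X | ↑p ∈ B₁} = ∅ := by
        ext z
        simp only [Set.mem_inter_iff, Set.mem_setOf_eq, Set.mem_empty_iff_false, iff_false]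
        rintro ⟨h1, h2⟩
        exact hdm ↑z (hA₁A h1) (hB₁B h2)
      have := bip_ncard_eq hAdj' hd' Mi hMi
      rwa [ncard_preimage_val Set.subset_union_left,
        ncard_preimage_val Set.subset_union_right] at this
    by_cases hedge : ∃ x y, G.Adj x y ∧ x ∉ A₁ ∧ y ∈ B₁
    · obtain ⟨x, y, hxy, hxA₁, hyB₁⟩ := hedge
      have hsne : s(x,y) ≠ s(u,v) := by
        intro h
        rcases Sym2.eq_iff.1 h with ⟨h1, h2⟩ | ⟨h1, h2⟩
        · exact hvB₁.2 (h2 ▸ hyB₁)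
        · exact hdm u hu (hB₁B (h2 ▸ hyB₁))
      have hxyE' : s(x,y) ∈ G'.edgeSet := (G'.mem_edgeSet).2 ((hG'adj x y).2 ⟨hxy, hsne⟩)
      obtain ⟨N, hN, hNe⟩ := hmc' s(x,y) hxyE'
      obtain ⟨M, hM, hMeq, hMuv⟩ := pm_of_pm_del N hN
      have hMxy : M.Adj x y := by
        rw [← SimpleGraph.Subgraph.mem_edgeSet, hMeq]
        exact hNe
      have hMuv' : s(u,v) ∉ M.edgeSet := by rw [hMeq]; exact hMuv
      have hpart : ∀ z ∈ A₁, pmP M hM z ∈ B₁ := by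
        intro z hz
        have hgz : G.Adj z (pmP M hM z) := M.adj_sub (pmP_adj M hM z)
        have hzB : pmP M hM z ∈ B := by
          rcases hAdj _ _ hgz with h | h
          · exact h.2
          · exact (hdm z (hA₁A hz) h.1).elim
        by_contra hnB₁
        have hzz := hcut z hz (pmP M hM z) ⟨hzB, hnB₁⟩ hgz
        apply hMuv'
        have : s(z, pmP M hM z) ∈ M.edgeSet :=
          SimpleGraph.Subgraph.mem_edgeSet.2 (pmP_adj M hM z)
        rwa [hzz.2, hzz.1] at this
      have hyim : ∀ z ∈ A₁, pmP M hM z ≠ y := by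
        intro z hz h
        have h1 : y = pmP M hM x := pmP_eq M hM hMxy
        have h2 : z = x := by
          have := congrArg (pmP M hM) (h.trans h1)
          rwa [pmP_invol, pmP_invol] at this
        exact hxA₁ (h2 ▸ hz)
      have hcount : A₁.ncard ≤ (B₁ \ {y}).ncard := by
        rw [← Set.ncard_image_of_injective A₁ (pmP_inj M hM)]
        apply Set.ncard_le_ncard _ (Set.toFinite _)
        rintro z' ⟨z, hz, rfl⟩
        exact ⟨hpart z hz, hyim z hz⟩
      rw [Set.ncard_diff_singleton_of_mem hyB₁] at hcount
      have hB₁pos : 0 < B₁.ncard := (Set.ncard_pos (Set.toFinite _)).2 hB₁ne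
      omega
    · push_neg at hedge
      have hclosed : ∀ ⦃x y⦄, G'.Adj x y → x ∈ X → y ∈ X := by
        intro x y hxy hx
        have hg := ((hG'adj x y).1 hxy).1
        have hs := ((hG'adj x y).1 hxy).2
        rcases hx with hx | hx
        · have hyB : y ∈ B := by
            rcases hAdj _ _ hg with h | h
            · exact h.2
            · exact (hdm x (hA₁A hx) h.1).elim
          by_cases hyB₁ : y ∈ B₁
          · exact Or.inr hyB₁
          · have hzz := hcut x hx y ⟨hyB, hyB₁⟩ hg
            exact absurd (by rw [hzz.1, hzz.2]) hs
        · by_cases hyA₁ : y ∈ A₁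
          · exact Or.inl hyA₁
          · exact absurd hx (hedge y x hg.symm hyA₁)
      have hvX : v ∈ X := reach_mem hclosed (hconn'.preconnected u v) (Or.inl huA₁)
      rcases hvX with h | h
      · exact hdm v (hA₁A h) hvB₁.1
      · exact hvB₁.2 h
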